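/- arXiv:2012.02667 — 3 statements merged into one kernel-verified Lean document; each statement's English description precedes it below -/
import Mathlib

section
/- For every integer N ≥ 2, the set A_N = {(x,y,z) ∈ ℝ³ : z^{2N} = x² + y² and 0 ≤ z ≤ 1} is not a Lipschitz neighborhood retract: there do not exist an open set U ⊆ ℝ³ with A_N ⊆ U and a map f : U → ℝ³ that is Lipschitz on U, satisfies f(U) ⊆ A_N, and satisfies f(x) = x for every x ∈ A_N. -/
section NW
open Metric Set Real

lemma telescope' (u : ℕ → ℂ) (h : ∀ k, u k * (starRingEnd ℂ) (u k) = 1) (m : ℕ) :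
    ∏ k ∈ Finset.range m, (u (k+1) * (starRingEnd ℂ) (u k)) = u m * (starRingEnd ℂ) (u 0) := by
  induction m with
  | zero => simp [(h 0).symm]
  | succ n ih =>
      rw [Finset.prod_range_succ, ih]
      calc u n * (starRingEnd ℂ) (u 0) * (u (n+1) * (starRingEnd ℂ) (u n))
          = (u n * (starRingEnd ℂ) (u n)) * (u (n+1) * (starRingEnd ℂ) (u 0)) := by ring
        _ = u (n+1) * (starRingEnd ℂ) (u 0) := by rw [h n]; ring

theorem no_winding (G : ℝ × ℝ → ℂ) (hGcont : Continuous G)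
    (habs : ∀ p, ‖G p‖ = 1)
    (hclamp : ∀ s θ, G (s, θ) = G (min 1 (max 0 s), θ))
    (hper : ∀ s, G (s, 2*π) = G (s, 0))
    (h0 : ∀ θ θ', G (0, θ) = G (0, θ'))
    (h1 : ∀ θ, G (1, θ) = Complex.exp (θ * Complex.I)) : False := by
  have hGconj : ∀ p, G p * (starRingEnd ℂ) (G p) = 1 := by
    intro p
    rw [Complex.mul_conj, Complex.normSq_eq_norm_sq, habs p]
    norm_num
  -- clamp facts
  have hclmem : ∀ s : ℝ, min 1 (max 0 s) ∈ Icc (0:ℝ) 1 := by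
    intro s
    constructor
    · exact le_min zero_le_one (le_max_left 0 s)
    · exact min_le_left 1 _
  -- uniform continuity
  have hcomp : IsCompact (Icc (0:ℝ) 1 ×ˢ Icc (0:ℝ) (2*π)) := isCompact_Icc.prod isCompact_Icc
  have huc := hcomp.uniformContinuousOn_of_continuous hGcont.continuousOn
  rw [Metric.uniformContinuousOn_iff] at huc
  obtain ⟨δ, hδ0, hδ⟩ := huc 1 one_pos
  obtain ⟨m₀, hm₀⟩ := exists_nat_gt (2*π/δ)
  set m := max m₀ 4 with hmdef
  have hm4 : (4:ℕ) ≤ m := le_max_right _ _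
  have hmpos : (0:ℝ) < m := by
    have : (4:ℕ) ≤ m := hm4
    exact_mod_cast lt_of_lt_of_le (by norm_num) this
  have hmne : (m:ℝ) ≠ 0 := ne_of_gt hmpos
  have hmδ : 2*π/m < δ := by
    have h1' : 2*π/δ < m := lt_of_lt_of_le hm₀ (by exact_mod_cast le_max_left m₀ 4)
    rw [div_lt_iff₀ hδ0] at h1'
    rw [div_lt_iff₀ hmpos]
    linarith
  set θk : ℕ → ℝ := fun k => 2*π*k/m with hθk
  have hθdiff : ∀ k : ℕ, θk (k+1) - θk k = 2*π/m := by
    intro k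
    simp only [hθk]
    push_cast
    field_simp
    ring
  have hθmem : ∀ k ≤ m, θk k ∈ Icc (0:ℝ) (2*π) := by
    intro k hk
    constructor
    · apply div_nonneg _ hmpos.le
      positivity
    · rw [div_le_iff₀ hmpos]
      have : (k:ℝ) ≤ m := by exact_mod_cast hk
      nlinarith [pi_pos]
  -- the difference bound
  have hGd : ∀ s ∈ Icc (0:ℝ) 1, ∀ k < m,
      ‖G (s, θk (k+1)) - G (s, θk k)‖ < 1 := by
    intro s hs k hk
    have h₁ : (s, θk (k+1)) ∈ Icc (0:ℝ) 1 ×ˢ Icc (0:ℝ) (2*π) :=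
      ⟨hs, hθmem (k+1) hk⟩
    have h₂ : (s, θk k) ∈ Icc (0:ℝ) 1 ×ˢ Icc (0:ℝ) (2*π) :=
      ⟨hs, hθmem k hk.le⟩
    have hd : dist ((s, θk (k+1)) : ℝ × ℝ) (s, θk k) < δ := by
      rw [Prod.dist_eq]
      simp only [dist_self]
      rw [max_lt_iff]
      refine ⟨hδ0, ?_⟩
      rw [Real.dist_eq, hθdiff k, abs_of_pos (by positivity)]
      exact hmδ
    have := hδ _ h₁ _ h₂ hd
    rwa [Complex.dist_eq] at this
  set q : ℕ → ℝ → ℂ := fun k s => G (s, θk (k+1)) * (starRingEnd ℂ) (G (s, θk k)) with hq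
  have hqabs : ∀ k s, ‖q k s‖ = 1 := by
    intro k s
    simp only [hq, norm_mul, Complex.norm_conj, habs, mul_one]
  have hqre : ∀ s : ℝ, ∀ k < m, 1/2 < (q k s).re := by
    intro s k hk
    have hcl : q k s = q k (min 1 (max 0 s)) := by
      simp only [hq]
      rw [hclamp s (θk (k+1)), hclamp s (θk k)]
    rw [hcl]
    set s' := min 1 (max 0 s) with hs'
    have hd := hGd s' (hclmem s) k hk
    have h1' : ‖q k s' - 1‖ < 1 := by
      have he : q k s' - 1 = (G (s', θk (k+1)) - G (s', θk k)) * (starRingEnd ℂ) (G (s', θk k)) := by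
        have := hGconj (s', θk k)
        simp only [hq]
        rw [sub_mul, this]
      rw [he, norm_mul, Complex.norm_conj, habs, mul_one]
      exact hd
    have e1 := Complex.sq_norm (q k s' - 1)
    have e2 := Complex.sq_norm (q k s')
    rw [hqabs] at e2
    rw [Complex.normSq_apply] at e1 e2
    simp only [Complex.sub_re, Complex.sub_im, Complex.one_re, Complex.one_im] at e1
    nlinarith [h1', norm_nonneg (q k s' - 1), sq_nonneg ((q k s').im)]
  set W : ℝ → ℝ := fun s => ∑ k ∈ Finset.range m, Complex.arg (q k s) with hW
  have hqcont : ∀ k, Continuous (fun s => q k s) := by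
    intro k
    exact ((hGcont.comp (continuous_id.prodMk continuous_const)).mul
      (Complex.continuous_conj.comp (hGcont.comp (continuous_id.prodMk continuous_const))))
  have hWcont : Continuous W := by
    apply continuous_finset_sum
    intro k hk
    rw [continuous_iff_continuousAt]
    intro s
    exact (Complex.continuousAt_arg (Or.inl (lt_trans (by norm_num)
      (hqre s k (Finset.mem_range.mp hk))))).comp (hqcont k).continuousAt
  have hWZ : ∀ s, ∃ n : ℤ, W s = n * (2*π) := by
    intro s
    have hexp : Complex.exp ((W s : ℝ) * Complex.I) = 1 := by
      have hsum : ((W s : ℝ) : ℂ) * Complex.I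
          = ∑ k ∈ Finset.range m, ((Complex.arg (q k s) : ℝ) : ℂ) * Complex.I := by
        rw [hW]
        push_cast
        rw [Finset.sum_mul]
      rw [hsum, Complex.exp_sum]
      have hterm : ∀ k ∈ Finset.range m,
          Complex.exp ((Complex.arg (q k s) : ℝ) * Complex.I) = q k s := by
        intro k _
        have := Complex.norm_mul_exp_arg_mul_I (q k s)
        rw [hqabs] at this
        simpa using this
      rw [Finset.prod_congr rfl hterm]
      rw [telescope' (fun k => G (s, θk k)) (fun k => hGconj _) m]
      have hθm : θk m = 2*π := by
        simp only [hθk]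
        field_simp
      have hθ0 : θk 0 = 0 := by simp [hθk]
      rw [hθm, hθ0, hper s, hGconj]
    rw [Complex.exp_eq_one_iff] at hexp
    obtain ⟨n, hn⟩ := hexp
    refine ⟨n, ?_⟩
    have h2 : ((W s : ℝ) : ℂ) * Complex.I = ((n * (2*π) : ℝ) : ℂ) * Complex.I := by
      rw [hn]; push_cast; ring
    have h3 := mul_right_cancel₀ Complex.I_ne_zero h2
    exact_mod_cast h3
  have hW0 : W 0 = 0 := by
    rw [hW]
    apply Finset.sum_eq_zero
    intro k _
    have : q k 0 = 1 := by
      simp only [hq]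
      rw [h0 (θk (k+1)) (θk k)]
      exact hGconj _
    rw [this, Complex.arg_one]
  have hW1 : W 1 = 2*π := by
    have hqone : ∀ k, q k 1 = Complex.exp ((2*π/m : ℝ) * Complex.I) := by
      intro k
      simp only [hq]
      rw [h1, h1, ← Complex.exp_conj]
      have hc : (starRingEnd ℂ) ((θk k : ℝ) * Complex.I) = -((θk k : ℝ) * Complex.I) := by
        rw [map_mul, Complex.conj_ofReal, Complex.conj_I]
        ring
      rw [hc, ← Complex.exp_add]
      congr 1
      rw [← sub_eq_add_neg, ← sub_mul]
      norm_cast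
      rw [hθdiff k]
    have hargone : Complex.arg (Complex.exp ((2*π/m : ℝ) * Complex.I)) = 2*π/m := by
      rw [Complex.exp_mul_I]
      apply Complex.arg_cos_add_sin_mul_I
      constructor
      · have : (0:ℝ) < 2*π/m := by positivity
        linarith [pi_pos]
      · rw [div_le_iff₀ hmpos]
        have h4 : (4:ℝ) ≤ m := by exact_mod_cast hm4
        nlinarith [pi_pos]
    show (∑ k ∈ Finset.range m, (q k 1).arg) = 2*π
    have hc : ∀ k ∈ Finset.range m, (q k 1).arg = 2*π/(m:ℝ) := fun k _ => by
      rw [hqone k, hargone]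
    rw [Finset.sum_congr rfl hc, Finset.sum_const, Finset.card_range, nsmul_eq_mul]
    field_simp
  -- IVT
  have hmemIcc : π ∈ Icc (W 0) (W 1) := by
    rw [hW0, hW1]
    constructor
    · exact pi_pos.le
    · linarith [pi_pos]
  obtain ⟨s, _, hs⟩ := intermediate_value_Icc zero_le_one hWcont.continuousOn hmemIcc
  obtain ⟨n, hn⟩ := hWZ s
  rw [hs] at hn
  have h2 : ((2*n - 1 : ℤ) : ℝ) * π = 0 := by push_cast; linarith
  rcases mul_eq_zero.mp h2 with h | h
  · have : (2*n - 1 : ℤ) = 0 := by exact_mod_cast h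
    omega
  · exact pi_ne_zero h

end NW
open Metric Set NNReal

noncomputable def Epts (a b c : ℝ) : EuclideanSpace ℝ (Fin 3) :=
  (EuclideanSpace.equiv (Fin 3) ℝ).symm ![a, b, c]

@[simp] lemma Epts_0 (a b c : ℝ) : Epts a b c 0 = a := rfl
@[simp] lemma Epts_1 (a b c : ℝ) : Epts a b c 1 = b := rfl
@[simp] lemma Epts_2 (a b c : ℝ) : Epts a b c 2 = c := rfl

lemma Epts_congr {a b c a' b' c' : ℝ} (ha : a = a') (hb : b = b') (hc : c = c') :
    Epts a b c = Epts a' b' c' := by rw [ha, hb, hc]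

lemma cont_Epts {X : Type*} [TopologicalSpace X] {a b c : X → ℝ}
    (ha : Continuous a) (hb : Continuous b) (hc : Continuous c) :
    Continuous (fun x => Epts (a x) (b x) (c x)) := by
  apply Continuous.comp (EuclideanSpace.equiv (Fin 3) ℝ).symm.continuous
  apply continuous_pi
  intro i
  fin_cases i <;> simpa [Matrix.cons_val_zero, Matrix.cons_val_one]

lemma cont_coord (i : Fin 3) : Continuous (fun p : EuclideanSpace ℝ (Fin 3) => p i) :=
  (continuous_apply i).comp (EuclideanSpace.equiv (Fin 3) ℝ).continuous

lemma coord_le_dist (p q : EuclideanSpace ℝ (Fin 3)) (i : Fin 3) :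
    |p i - q i| ≤ dist p q := by
  rw [EuclideanSpace.dist_eq, ← Real.sqrt_sq_eq_abs]
  apply Real.sqrt_le_sqrt
  have h2 : (p i - q i)^2 = dist (p i) (q i) ^ 2 := by rw [Real.dist_eq, _root_.sq_abs]
  rw [h2]
  exact Finset.single_le_sum (f := fun j => dist (p j) (q j) ^ 2)
    (fun j _ => sq_nonneg _) (Finset.mem_univ i)

lemma dist3 (p q : EuclideanSpace ℝ (Fin 3)) :
    dist p q = Real.sqrt ((p 0 - q 0)^2 + (p 1 - q 1)^2 + (p 2 - q 2)^2) := by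
  rw [EuclideanSpace.dist_eq, Fin.sum_univ_three]
  simp [Real.dist_eq, _root_.sq_abs]

/-- For N ≥ 2, the cusped surface of revolution
`A_N = {(x,y,z) : z^(2N) = x² + y² ∧ 0 ≤ z ≤ 1}` is not a Lipschitz
neighborhood retract of ℝ³. -/
theorem not_lipschitz_neighborhood_retract (N : ℕ) (hN : 2 ≤ N)
    (A : Set (EuclideanSpace ℝ (Fin 3)))
    (hA : A = {p : EuclideanSpace ℝ (Fin 3) |
      (p 2 : ℝ) ^ (2 * N) = (p 0 : ℝ) ^ 2 + (p 1 : ℝ) ^ 2 ∧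
        (0 : ℝ) ≤ p 2 ∧ (p 2 : ℝ) ≤ 1}) :
    ¬ ∃ (U : Set (EuclideanSpace ℝ (Fin 3)))
        (f : EuclideanSpace ℝ (Fin 3) → EuclideanSpace ℝ (Fin 3)) (K : ℝ≥0),
        IsOpen U ∧ A ⊆ U ∧ LipschitzOnWith K f U ∧
        (∀ x ∈ U, f x ∈ A) ∧ (∀ x ∈ A, f x = x) := by
  rintro ⟨U, f, K, hU, hAU, hfL, hfU, hfid⟩
  subst hA
  have hz3 : ∀ i : Fin 3, (0 : EuclideanSpace ℝ (Fin 3)) i = 0 := fun _ => rfl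
  have h0A : (0 : EuclideanSpace ℝ (Fin 3)) ∈ {p : EuclideanSpace ℝ (Fin 3) |
      (p 2 : ℝ) ^ (2 * N) = (p 0 : ℝ) ^ 2 + (p 1 : ℝ) ^ 2 ∧
        (0 : ℝ) ≤ p 2 ∧ (p 2 : ℝ) ≤ 1} := by
    refine ⟨?_, ?_, ?_⟩
    · simp only [hz3]
      rw [zero_pow (by omega : 2*N ≠ 0)]
      norm_num
    · simp [hz3]
    · simp [hz3]
  obtain ⟨r, hr0, hrU⟩ := Metric.isOpen_iff.mp hU 0 (hAU h0A)
  have hK0 : (0:ℝ) ≤ (K:ℝ) := K.coe_nonneg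
  obtain ⟨t, ht0, ht1, htr, htK⟩ : ∃ t:ℝ, 0 < t ∧ t ≤ 1 ∧ 2*t < r ∧ (K:ℝ)*t < 1 := by
    refine ⟨min (min (r/4) (1/((K:ℝ)+1))) 1, ?_, min_le_right _ _, ?_, ?_⟩
    · exact lt_min (lt_min (by positivity) (by positivity)) one_pos
    · have : min (min (r/4) (1/((K:ℝ)+1))) 1 ≤ r/4 :=
        le_trans (min_le_left _ _) (min_le_left _ _)
      linarith
    · have h2 : min (min (r/4) (1/((K:ℝ)+1))) 1 ≤ 1/((K:ℝ)+1) :=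
        le_trans (min_le_left _ _) (min_le_right _ _)
      have hK1 : (0:ℝ) < (K:ℝ)+1 := by linarith
      calc (K:ℝ) * min (min (r/4) (1/((K:ℝ)+1))) 1 ≤ (K:ℝ) * (1/((K:ℝ)+1)) :=
            mul_le_mul_of_nonneg_left h2 hK0
        _ < 1 := by rw [mul_one_div, div_lt_one hK1]; linarith
  set T : ℝ := t^N with hTdef
  have hT0 : 0 < T := pow_pos ht0 N
  have hTt : T ≤ t := by
    have := pow_le_pow_of_le_one ht0.le ht1 (by omega : 1 ≤ N)
    simpa using this
  have hT2 : T ≤ t^2 := pow_le_pow_of_le_one ht0.le ht1 hN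
  -- circle points and disk points
  set cθ : ℝ → EuclideanSpace ℝ (Fin 3) :=
    fun θ => Epts (T * Real.cos θ) (T * Real.sin θ) t with hcθ
  set γ : ℝ × ℝ → EuclideanSpace ℝ (Fin 3) :=
    fun p => Epts ((min 1 (max 0 p.1)) * (T * Real.cos p.2))
      ((min 1 (max 0 p.1)) * (T * Real.sin p.2)) t with hγ
  have hcl0 : ∀ s : ℝ, 0 ≤ min 1 (max 0 s) := fun s => le_min zero_le_one (le_max_left 0 s)
  have hcl1 : ∀ s : ℝ, min 1 (max 0 s) ≤ 1 := fun s => min_le_left 1 _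
  have hcA : ∀ θ, cθ θ ∈ {p : EuclideanSpace ℝ (Fin 3) |
      (p 2 : ℝ) ^ (2 * N) = (p 0 : ℝ) ^ 2 + (p 1 : ℝ) ^ 2 ∧
        (0 : ℝ) ≤ p 2 ∧ (p 2 : ℝ) ≤ 1} := by
    intro θ
    refine ⟨?_, ht0.le, ht1⟩
    simp only [hcθ, Epts_0, Epts_1, Epts_2]
    have hpyth := Real.sin_sq_add_cos_sq θ
    rw [hTdef]
    linear_combination (-(t^N)^2) * hpyth
  have hfc : ∀ θ, f (cθ θ) = cθ θ := fun θ => hfid _ (hcA θ)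
  have hγU : ∀ p, γ p ∈ U := by
    intro p
    apply hrU
    rw [mem_ball, dist3]
    simp only [hγ, Epts_0, Epts_1, Epts_2, hz3]
    set s1 := min 1 (max 0 p.1)
    have hpyth := Real.sin_sq_add_cos_sq p.2
    have he : (s1 * (T * Real.cos p.2) - 0)^2 + (s1 * (T * Real.sin p.2) - 0)^2 + (t - 0)^2
        = s1^2 * T^2 + t^2 := by linear_combination (s1^2*T^2) * hpyth
    rw [he]
    have hb : s1^2 * T^2 + t^2 ≤ (2*t)^2 := by
      have h1 := hcl0 p.1
      have h2 := hcl1 p.1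
      have hs1 : s1^2 ≤ 1 := by nlinarith
      have hT2' : T^2 ≤ t^2 := by nlinarith
      have hmm : s1^2 * T^2 ≤ 1 * t^2 := mul_le_mul hs1 hT2' (sq_nonneg T) zero_le_one
      nlinarith
    calc Real.sqrt (s1^2 * T^2 + t^2) ≤ Real.sqrt ((2*t)^2) := Real.sqrt_le_sqrt hb
      _ = 2*t := Real.sqrt_sq (by linarith)
      _ < r := htr
  have hdistγc : ∀ p : ℝ × ℝ, dist (γ p) (cθ p.2) ≤ T := by
    intro p
    rw [dist3]
    simp only [hγ, hcθ, Epts_0, Epts_1, Epts_2]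
    set s1 := min 1 (max 0 p.1)
    have hpyth := Real.sin_sq_add_cos_sq p.2
    have he : (s1 * (T * Real.cos p.2) - T * Real.cos p.2)^2
        + (s1 * (T * Real.sin p.2) - T * Real.sin p.2)^2 + (t - t)^2
        = (1 - s1)^2 * T^2 := by linear_combination ((1-s1)^2*T^2) * hpyth
    rw [he]
    have hb : (1 - s1)^2 * T^2 ≤ T^2 := by
      have h1 := hcl0 p.1
      have h2 := hcl1 p.1
      have hs1 : (1 - s1)^2 ≤ 1 := by nlinarith
      have := mul_le_mul_of_nonneg_right hs1 (sq_nonneg T)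
      linarith
    calc Real.sqrt ((1-s1)^2 * T^2) ≤ Real.sqrt (T^2) := Real.sqrt_le_sqrt hb
      _ = T := Real.sqrt_sq hT0.le
  have hKT : (K:ℝ) * T < t := by
    have h1 : (K:ℝ)*T ≤ (K:ℝ)*t^2 := mul_le_mul_of_nonneg_left hT2 hK0
    have h3 : ((K:ℝ)*t)*t < 1*t := mul_lt_mul_of_pos_right htK ht0
    nlinarith
  have hfne : ∀ p : ℝ × ℝ, ¬(f (γ p) 0 = 0 ∧ f (γ p) 1 = 0) := by
    rintro p ⟨ha, hb⟩
    obtain ⟨he, hz0, hz1⟩ := hfU _ (hγU p)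
    rw [ha, hb] at he
    norm_num at he
    have h2N : 2*N ≠ 0 := by omega
    have hz : f (γ p) 2 = 0 := he.1
    have hco := coord_le_dist (f (γ p)) (cθ p.2) 2
    rw [hz] at hco
    simp only [hcθ, Epts_2] at hco
    rw [abs_of_nonpos (by linarith)] at hco
    have hlip := hfL.dist_le_mul (γ p) (hγU p) (cθ p.2) (hAU (hcA p.2))
    rw [hfc p.2] at hlip
    have : dist (f (γ p)) (cθ p.2) ≤ (K:ℝ) * T :=
      le_trans hlip (mul_le_mul_of_nonneg_left (hdistγc p) hK0)
    linarith
  -- complex projection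
  set w : ℝ × ℝ → ℂ := fun p => ((f (γ p) 0 : ℝ) : ℂ) + ((f (γ p) 1 : ℝ) : ℂ) * Complex.I
    with hw
  have hw0 : ∀ p, w p ≠ 0 := by
    intro p h
    apply hfne p
    have hre : (w p).re = f (γ p) 0 := by simp [hw]
    have him : (w p).im = f (γ p) 1 := by simp [hw]
    rw [h] at hre him
    simp at hre him
    exact ⟨hre.symm, him.symm⟩
  set G : ℝ × ℝ → ℂ := fun p => w p / ((‖w p‖ : ℝ) : ℂ) with hG
  have habs : ∀ p, ‖G p‖ = 1 := by
    intro p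
    simp only [hG, norm_div, Complex.norm_real, norm_norm]
    exact div_self (norm_ne_zero_iff.mpr (hw0 p))
  -- γ congruence transfers
  have hwcongr : ∀ p p' : ℝ × ℝ, γ p = γ p' → G p = G p' := by
    intro p p' h
    simp only [hG, hw, h]
  have hclcl : ∀ s : ℝ, min 1 (max 0 (min 1 (max 0 s))) = min 1 (max 0 s) := by
    intro s
    rw [max_eq_right (hcl0 s), min_eq_right (hcl1 s)]
  have hclamp : ∀ s θ : ℝ, G (s, θ) = G (min 1 (max 0 s), θ) := by
    intro s θ
    apply hwcongr
    simp only [hγ]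
    exact Epts_congr (by rw [hclcl]) (by rw [hclcl]) rfl
  have hper : ∀ s : ℝ, G (s, 2*Real.pi) = G (s, 0) := by
    intro s
    apply hwcongr
    simp only [hγ]
    exact Epts_congr (by rw [Real.cos_two_pi, Real.cos_zero])
      (by rw [Real.sin_two_pi, Real.sin_zero]) rfl
  have h0 : ∀ θ θ' : ℝ, G (0, θ) = G (0, θ') := by
    intro θ θ'
    apply hwcongr
    simp only [hγ]
    have hm : min (1:ℝ) (max 0 (0:ℝ)) = 0 := by norm_num
    exact Epts_congr (by rw [hm]; ring) (by rw [hm]; ring) rfl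
  have h1 : ∀ θ : ℝ, G (1, θ) = Complex.exp ((θ:ℂ) * Complex.I) := by
    intro θ
    have hγ1 : γ (1, θ) = cθ θ := by
      simp only [hγ, hcθ]
      have hm : min (1:ℝ) (max 0 (1:ℝ)) = 1 := by norm_num
      exact Epts_congr (by rw [hm, one_mul]) (by rw [hm, one_mul]) rfl
    have hw1 : w (1, θ) = (T : ℂ) * Complex.exp ((θ:ℂ) * Complex.I) := by
      simp only [hw, hγ1, hfc θ]
      simp only [hcθ, Epts_0, Epts_1]
      rw [Complex.exp_mul_I, ← Complex.ofReal_cos, ← Complex.ofReal_sin]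
      push_cast
      ring
    simp only [hG, hw1]
    rw [norm_mul, Complex.norm_real, Real.norm_eq_abs, abs_of_pos hT0, Complex.norm_exp_ofReal_mul_I, mul_one]
    exact mul_div_cancel_left₀ _ (Complex.ofReal_ne_zero.mpr hT0.ne')
  -- continuity
  have hγcont : Continuous γ := by
    apply cont_Epts
    · exact (continuous_const.min (continuous_const.max continuous_fst)).mul
        (continuous_const.mul (Real.continuous_cos.comp continuous_snd))
    · exact (continuous_const.min (continuous_const.max continuous_fst)).mul
        (continuous_const.mul (Real.continuous_sin.comp continuous_snd))
    · exact continuous_const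
  have hfγ : Continuous (fun p => f (γ p)) := by
    have := hfL.continuousOn.comp (s := (Set.univ : Set (ℝ × ℝ))) hγcont.continuousOn
      (fun p _ => hγU p)
    rwa [continuousOn_univ] at this
  have hwcont : Continuous w := by
    rw [hw]
    exact (Complex.continuous_ofReal.comp ((cont_coord 0).comp hfγ)).add
      ((Complex.continuous_ofReal.comp ((cont_coord 1).comp hfγ)).mul continuous_const)
  have hGcont : Continuous G := by
    rw [hG]
    exact hwcont.div (Complex.continuous_ofReal.comp (continuous_norm.comp hwcont))
      (fun p => Complex.ofReal_ne_zero.mpr (norm_ne_zero_iff.mpr (hw0 p)))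
  exact no_winding G hGcont habs hclamp hper h0 h1
end

section
/- Let N ≥ 2 be an integer and let q be a real number with q > (N+1)/N. Then the quotient (2π ∫₀ʰ z^N √(1 + (N z^{N−1})²) dz) / (2π h^N)^q tends to +∞ as h → 0⁺ (i.e., along the filter of positive reals approaching 0). -/
open Real Filter Set

/-- For N ≥ 2 and q > (N+1)/N, the ratio of the area
`2π ∫₀ʰ z^N √(1 + (N z^(N-1))²) dz` to `(2π h^N)^q` tends to `+∞`
as `h → 0⁺`. -/
theorem isoperimetric_ratio_tendsto_atTop (N : ℕ) (hN : 2 ≤ N) (q : ℝ)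
    (hq : ((N : ℝ) + 1) / N < q) :
    Tendsto
      (fun h : ℝ =>
        (2 * π * ∫ z in (0:ℝ)..h, z ^ N * Real.sqrt (1 + ((N : ℝ) * z ^ (N - 1)) ^ 2)) /
          (2 * π * h ^ N) ^ q)
      (nhdsWithin 0 (Set.Ioi 0)) atTop := by
  have hπ : (0:ℝ) < π := Real.pi_pos
  have hNpos : (0:ℝ) < N := by positivity
  have hNq : (N:ℝ) + 1 < N * q := by
    have := (div_lt_iff₀ hNpos).mp hq
    linarith
  set e : ℝ := ((N:ℝ) + 1) - N * q with he
  have he_neg : e < 0 := by simp [he]; linarith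
  set c : ℝ := (2 * π / ((N:ℝ) + 1)) / (2 * π) ^ q with hc
  have hc_pos : 0 < c := by
    apply div_pos (by positivity)
    exact Real.rpow_pos_of_pos (by positivity) q
  -- lower bound
  have key : ∀ h : ℝ, h ∈ Set.Ioi (0:ℝ) →
      c * h ^ e ≤ (2 * π * ∫ z in (0:ℝ)..h, z ^ N * Real.sqrt (1 + ((N : ℝ) * z ^ (N - 1)) ^ 2)) /
          (2 * π * h ^ N) ^ q := by
    intro h hh
    have hh : 0 < h := hh
    have hcont : Continuous (fun z : ℝ => z ^ N * Real.sqrt (1 + ((N : ℝ) * z ^ (N - 1)) ^ 2)) := by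
      fun_prop
    have hIB : (h ^ (N+1)) / ((N:ℝ) + 1) ≤ ∫ z in (0:ℝ)..h, z ^ N * Real.sqrt (1 + ((N : ℝ) * z ^ (N - 1)) ^ 2) := by
      have h1 : (∫ z in (0:ℝ)..h, z ^ N) ≤ ∫ z in (0:ℝ)..h, z ^ N * Real.sqrt (1 + ((N : ℝ) * z ^ (N - 1)) ^ 2) := by
        apply intervalIntegral.integral_mono_on hh.le ((continuous_pow N).intervalIntegrable 0 h)
          (hcont.intervalIntegrable 0 h)
        intro x hx
        have hx0 : 0 ≤ x := hx.1
        have hs : 1 ≤ Real.sqrt (1 + ((N : ℝ) * x ^ (N - 1)) ^ 2) := by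
          have h1 : Real.sqrt 1 ≤ Real.sqrt (1 + ((N : ℝ) * x ^ (N - 1)) ^ 2) :=
            Real.sqrt_le_sqrt (by nlinarith [sq_nonneg ((N:ℝ) * x ^ (N - 1))])
          simpa using h1
        calc x ^ N = x ^ N * 1 := by ring
          _ ≤ x ^ N * Real.sqrt (1 + ((N : ℝ) * x ^ (N - 1)) ^ 2) := by
              exact mul_le_mul_of_nonneg_left hs (by positivity)
      have h2 : (∫ z in (0:ℝ)..h, z ^ N) = h ^ (N+1) / ((N:ℝ)+1) := by
        rw [integral_pow]; ring
      linarith [h1, h2 ▸ h1]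
    -- rewrite denominator
    have hden : (2 * π * h ^ N) ^ q = (2 * π) ^ q * h ^ ((N:ℝ) * q) := by
      rw [Real.mul_rpow (by positivity) (by positivity)]
      congr 1
      rw [← Real.rpow_natCast h N, ← Real.rpow_mul hh.le]
    have hdenpos : 0 < (2 * π * h ^ N) ^ q :=
      Real.rpow_pos_of_pos (by positivity) q
    rw [le_div_iff₀ hdenpos]
    have hchain : c * h ^ e * (2 * π * h ^ N) ^ q = 2 * π * (h ^ (N+1) / ((N:ℝ)+1)) := by
      rw [hden, hc]
      have h1 : h ^ e * h ^ ((N:ℝ) * q) = h ^ ((N:ℝ)+1) := by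
        rw [← Real.rpow_add hh, he]; ring_nf
      have h2 : h ^ ((N:ℝ)+1) = h ^ (N+1) := by
        rw [← Real.rpow_natCast h (N+1)]; push_cast; ring_nf
      field_simp
      have hcomb : h ^ e * h ^ ((N:ℝ) * q) = h ^ (N+1) := h1.trans h2
      linear_combination hcomb
    rw [hchain]
    have := mul_le_mul_of_nonneg_left hIB (le_of_lt (by positivity : (0:ℝ) < 2 * π))
    linarith
  -- tendsto of the lower bound
  have T : Tendsto (fun h : ℝ => c * h ^ e) (nhdsWithin 0 (Set.Ioi 0)) atTop := by
    apply Tendsto.const_mul_atTop hc_pos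
    have T1 : Tendsto (fun h : ℝ => (h⁻¹) ^ (-e)) (nhdsWithin 0 (Set.Ioi 0)) atTop :=
      (tendsto_rpow_atTop (by linarith : 0 < -e)).comp tendsto_inv_nhdsGT_zero
    apply T1.congr'
    filter_upwards [self_mem_nhdsWithin] with h hh
    have hh0 : 0 ≤ h := (mem_Ioi.mp hh).le
    rw [Real.inv_rpow hh0, Real.rpow_neg hh0, inv_inv]
  apply tendsto_atTop_mono' _ _ T
  filter_upwards [self_mem_nhdsWithin] with h hh using key h hh
end

section
/- Let E be a metric space, K ⊆ E a nonempty subset, a ∈ K, and L > 0. Suppose h : [0,1] × K → E is Lipschitz with constant L (with respect to the metric max(|s − t|, dist(x, y)) on [0,1] × K), takes values in K, and satisfies h(0, x) = x and h(1, x) = a for every x ∈ K. Then for all b, c ∈ K there exists a continuous map γ : [0,1] → E with γ(0) = b, γ(1) = c, γ([0,1]) ⊆ K, and total variation (arc length) of γ on [0,1] at most 2L. In particular, the intrinsic diameter of K is at most 2L. -/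
open Set NNReal

/-- If `h : [0,1] × K → K` is an `L`-Lipschitz contraction of `K` to a point
`a ∈ K` (i.e. `h(0,·) = id`, `h(1,·) ≡ a`), then any two points `b, c ∈ K` are
joined by a continuous path in `K` of arc length (total variation) at most
`2L`; in particular the intrinsic diameter of `K` is at most `2L`. -/
theorem intrinsic_diameter_le_of_lipschitz_contraction
    {E : Type*} [MetricSpace E] (K : Set E) (hK : K.Nonempty)
    (a : E) (ha : a ∈ K) (L : ℝ≥0) (hL : 0 < L)
    (h : ℝ × E → E)
    (hlip : LipschitzOnWith L h (Set.Icc (0:ℝ) 1 ×ˢ K))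
    (hmaps : ∀ t ∈ Set.Icc (0:ℝ) 1, ∀ x ∈ K, h (t, x) ∈ K)
    (h0 : ∀ x ∈ K, h (0, x) = x)
    (h1 : ∀ x ∈ K, h (1, x) = a) :
    ∀ b ∈ K, ∀ c ∈ K, ∃ γ : ℝ → E,
      ContinuousOn γ (Set.Icc (0:ℝ) 1) ∧
      γ 0 = b ∧ γ 1 = c ∧
      γ '' Set.Icc (0:ℝ) 1 ⊆ K ∧
      eVariationOn γ (Set.Icc (0:ℝ) 1) ≤ ENNReal.ofReal (2 * L) := by
  intro b hb c hc
  set γ : ℝ → E := fun t => if t ≤ 1/2 then h (2*t, b) else h (2 - 2*t, c) with hγ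
  -- basic distance estimate
  have key : ∀ u ∈ Set.Icc (0:ℝ) 1, ∀ v ∈ Set.Icc (0:ℝ) 1, ∀ x ∈ K,
      dist (h (u, x)) (h (v, x)) ≤ L * |u - v| := by
    intro u hu v hv x hx
    have := (lipschitzOnWith_iff_dist_le_mul.mp hlip) (u, x) ⟨hu, hx⟩ (v, x) ⟨hv, hx⟩
    simpa [Prod.dist_eq, Real.dist_eq, abs_nonneg] using this
  -- Lipschitz bound for γ
  have hlipγ : LipschitzOnWith (2 * L) γ (Set.Icc (0:ℝ) 1) := by
    rw [lipschitzOnWith_iff_dist_le_mul]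
    have main : ∀ s ∈ Set.Icc (0:ℝ) 1, ∀ t ∈ Set.Icc (0:ℝ) 1, s ≤ t →
        dist (γ s) (γ t) ≤ (2 * L : ℝ≥0) * dist s t := by
      intro s hs t ht hst
      push_cast
      rw [Real.dist_eq, abs_of_nonpos (by linarith)]
      by_cases hs2 : s ≤ 1/2
      · by_cases ht2 : t ≤ 1/2
        · have : dist (γ s) (γ t) ≤ L * |2*s - 2*t| := by
            simp only [hγ, if_pos hs2, if_pos ht2]
            exact key (2*s) ⟨by linarith [hs.1], by linarith⟩ (2*t)
              ⟨by linarith [ht.1], by linarith⟩ b hb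
          rw [abs_of_nonpos (by linarith), ] at this
          calc dist (γ s) (γ t) ≤ L * -(2*s - 2*t) := this
          _ = 2 * L * -(s - t) := by ring
        · push_neg at ht2
          have h1b : h ((1:ℝ), b) = a := h1 b hb
          have h1c : h ((1:ℝ), c) = a := h1 c hc
          have d1 : dist (γ s) a ≤ L * (1 - 2*s) := by
            simp only [hγ, if_pos hs2, ← h1b]
            have := key (2*s) ⟨by linarith [hs.1], by linarith⟩ 1
              ⟨by norm_num, by norm_num⟩ b hb
            rwa [abs_of_nonpos (by linarith), neg_sub] at this
          have d2 : dist a (γ t) ≤ L * (2*t - 1) := by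
            simp only [hγ, if_neg (not_le.mpr ht2), ← h1c]
            have := key 1 ⟨by norm_num, by norm_num⟩ (2 - 2*t)
              ⟨by linarith [ht.2], by linarith⟩ c hc
            rw [abs_of_nonneg (by linarith)] at this
            rw [dist_comm]
            calc dist (h (2 - 2*t, c)) (h (1, c)) ≤ ↑L * (1 - (2 - 2*t)) := by rw [dist_comm]; exact this
            _ = ↑L * (2*t - 1) := by ring
          calc dist (γ s) (γ t) ≤ dist (γ s) a + dist a (γ t) := dist_triangle _ _ _
          _ ≤ L * (1 - 2*s) + L * (2*t - 1) := add_le_add d1 d2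
          _ = 2 * L * -(s - t) := by ring
      · push_neg at hs2
        have ht2 : ¬ t ≤ 1/2 := by push_neg; linarith
        have : dist (γ s) (γ t) ≤ L * |(2 - 2*s) - (2 - 2*t)| := by
          simp only [hγ, if_neg (not_le.mpr hs2), if_neg ht2]
          exact key (2 - 2*s) ⟨by linarith [hs.2], by linarith⟩ (2 - 2*t)
            ⟨by linarith [ht.2], by linarith⟩ c hc
        have habs : |(2 - 2*s) - (2 - 2*t)| = -(2*s - 2*t) := by
          rw [show (2 - 2*s) - (2 - 2*t) = -(2*s - 2*t) by ring,
            abs_of_nonneg (by linarith)]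
        rw [habs] at this
        calc dist (γ s) (γ t) ≤ L * -(2*s - 2*t) := this
        _ = 2 * L * -(s - t) := by ring
    intro s hs t ht
    rcases le_total s t with hst | hst
    · exact main s hs t ht hst
    · rw [dist_comm, dist_comm s t]; exact main t ht s hs hst
  refine ⟨γ, hlipγ.continuousOn, ?_, ?_, ?_, ?_⟩
  · simp only [hγ]; norm_num; exact h0 b hb
  · simp only [hγ]; norm_num; exact h0 c hc
  · rintro _ ⟨t, ht, rfl⟩
    simp only [hγ]
    split_ifs with h2
    · exact hmaps (2*t) ⟨by linarith [ht.1], by linarith⟩ b hb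
    · push_neg at h2
      exact hmaps (2 - 2*t) ⟨by linarith [ht.2], by linarith⟩ c hc
  · have hid : eVariationOn (id : ℝ → ℝ) (Set.Icc (0:ℝ) 1) ≤ ENNReal.ofReal 1 := by
      have := (monotoneOn_id (s := Set.Icc (0:ℝ) 1)).eVariationOn_le
        (a := 0) (b := 1) (by norm_num) (by norm_num)
      simpa using this
    have := LipschitzOnWith.comp_eVariationOn_le hlipγ
      (Set.mapsTo_id (Set.Icc (0:ℝ) 1))
    calc eVariationOn γ (Set.Icc (0:ℝ) 1)
        ≤ (2 * L : ℝ≥0) * eVariationOn (id : ℝ → ℝ) (Set.Icc (0:ℝ) 1) := by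
          simpa using this
      _ ≤ (2 * L : ℝ≥0) * ENNReal.ofReal 1 := by
          exact mul_le_mul_right hid _
      _ = ENNReal.ofReal (2 * L) := by
          rw [ENNReal.ofReal_one, mul_one, ← ENNReal.ofReal_coe_nnreal]
          congr 1
end
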